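/- For every q ∈ ℕ, the sum Σ₁^κ(q) := Σ_{q₁+⋯+q_κ = q, q_i ≥ 0} 1/(1^{q₁}·2^{q₂}⋯κ^{q_κ}) satisfies Σ₁^κ(q) = (log κ)^q / q! + O((log κ)^{q-1}) as κ → ∞; more precisely there is a constant C (depending on q) such that |Σ₁^κ(q) − (log κ)^q/q!| ≤ C·(log κ)^{q-1} for all κ ≥ 2. -/

import Mathlib

open Finset

private lemma aux_sq : ∀ n : ℕ, 1 ≤ n →
    ∑ i ∈ Finset.range n, (((i : ℝ) + 1)⁻¹) ^ 2 ≤ 2 - (n : ℝ)⁻¹ := by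
  intro n hn
  induction n, hn using Nat.le_induction with
  | base => norm_num
  | succ n hn ih =>
    rw [Finset.sum_range_succ]
    have hn0 : (0:ℝ) < n := by exact_mod_cast hn
    have e1 : (n:ℝ)⁻¹ - ((n:ℝ)+1)⁻¹ = ((n:ℝ)*((n:ℝ)+1))⁻¹ := by
      rw [mul_inv]; field_simp; ring
    have e2 : (((n:ℝ)+1)⁻¹) ^ 2 = (((n:ℝ)+1)*((n:ℝ)+1))⁻¹ := by
      rw [sq, mul_inv]
    have e3 : (((n:ℝ)+1)*((n:ℝ)+1))⁻¹ ≤ ((n:ℝ)*((n:ℝ)+1))⁻¹ := by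
      apply inv_anti₀ (by positivity)
      nlinarith
    push_cast
    linarith [ih, e3, e1.symm ▸ e3]

private lemma aux_pow_sub (a b : ℝ) (hb : 0 ≤ b) (hab : b ≤ a) :
    ∀ n : ℕ, a ^ n - b ^ n ≤ n * a ^ (n - 1) * (a - b) := by
  intro n
  induction n with
  | zero => simp
  | succ n ih =>
    have ha : 0 ≤ a := hb.trans hab
    rcases Nat.eq_zero_or_pos n with h | h
    · subst h; simp
    · have hpow : a * a ^ (n - 1) = a ^ n := by
        rw [← pow_succ']; congr 1; omega
      have h4 : b ^ n ≤ a ^ n := pow_le_pow_left₀ hb hab n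
      have h2 : a * (a ^ n - b ^ n) ≤ a * (n * a ^ (n-1) * (a - b)) :=
        mul_le_mul_of_nonneg_left ih ha
      have h3 : a * ((n:ℝ) * a ^ (n-1) * (a - b)) = n * a ^ n * (a - b) := by
        rw [← hpow]; ring
      have key : a ^ (n+1) - b ^ (n+1) = a * (a ^ n - b ^ n) + (a - b) * b ^ n := by
        ring
      have h5 : (a - b) * b ^ n ≤ (a - b) * a ^ n :=
        mul_le_mul_of_nonneg_left h4 (by linarith)
      have : a ^ (n+1) - b ^ (n+1) ≤ (n:ℝ) * a ^ n * (a-b) + (a-b) * a ^ n := by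
        rw [key]; linarith [h2, h3.symm ▸ h2]
      calc a ^ (n+1) - b ^ (n+1) ≤ (n:ℝ) * a ^ n * (a-b) + (a-b) * a ^ n := this
        _ = ((n:ℝ)+1) * a ^ n * (a-b) := by ring
        _ = ((n+1 : ℕ):ℝ) * a ^ ((n+1)-1) * (a-b) := by push_cast; simp

set_option maxHeartbeats 2000000 in
/-- The polylogarithmic sum `Σ₁^κ(q) = Σ_{q₁+⋯+q_κ=q} 1/(1^{q₁}·2^{q₂}⋯κ^{q_κ})`
satisfies `Σ₁^κ(q) = (log κ)^q / q! + O((log κ)^{q-1})` as `κ → ∞`. -/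
theorem stmt_1 (q : ℕ) :
    ∃ C : ℝ, ∀ κ : ℕ, 2 ≤ κ →
      |(∑ f ∈ (Fintype.piFinset fun _ : Fin κ => Finset.range (q + 1)).filter
            (fun f => ∑ i, f i = q),
          (∏ i : Fin κ, (((i : ℕ) : ℝ) + 1) ^ (f i))⁻¹)
        - (Real.log κ) ^ q / (q.factorial : ℝ)| ≤ C * (Real.log κ) ^ (q - 1) := by
  classical
  refine ⟨((q:ℝ) + 2) * 3 ^ q, ?_⟩
  intro κ hκ
  have hκ0 : 0 < κ := by omega
  set x : Fin κ → ℝ := fun i => (((i : ℕ) : ℝ) + 1)⁻¹ with hxdef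
  have hx0 : ∀ i, 0 < x i := fun i => by positivity
  set P : ℝ := ∑ i, x i with hPdef
  set L : ℝ := Real.log κ with hLdef
  set F : ℝ := (q.factorial : ℝ) with hFdef
  have hF : 0 < F := by rw [hFdef]; exact_mod_cast q.factorial_pos
  -- Step A : rewrite the sum
  have hset : (Fintype.piFinset fun _ : Fin κ => Finset.range (q + 1)).filter
      (fun f => ∑ i, f i = q) = Finset.piAntidiag (Finset.univ : Finset (Fin κ)) q := by
    ext f
    simp only [Finset.mem_filter, Fintype.mem_piFinset, Finset.mem_range, Nat.lt_succ_iff,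
      Finset.mem_piAntidiag, Finset.mem_univ, implies_true, and_true, ne_eq]
    constructor
    · rintro ⟨-, h⟩; exact h
    · intro h
      exact ⟨fun i => (Finset.single_le_sum (f := f) (fun j _ => Nat.zero_le _)
        (Finset.mem_univ i)).trans_eq h, h⟩
  have hA : (∑ f ∈ (Fintype.piFinset fun _ : Fin κ => Finset.range (q + 1)).filter
            (fun f => ∑ i, f i = q),
          (∏ i : Fin κ, (((i : ℕ) : ℝ) + 1) ^ (f i))⁻¹)
      = ∑ k ∈ Finset.piAntidiag (Finset.univ : Finset (Fin κ)) q, ∏ i, x i ^ k i := by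
    rw [hset]
    refine Finset.sum_congr rfl fun k _ => ?_
    rw [← Finset.prod_inv_distrib]
    exact Finset.prod_congr rfl fun i _ => by rw [← inv_pow]
  -- multinomial theorem
  have h2 : ∀ r : ℕ, P ^ r = ∑ k ∈ Finset.piAntidiag (Finset.univ : Finset (Fin κ)) r,
      (Nat.multinomial Finset.univ k : ℝ) * ∏ i, x i ^ k i := fun r => by
    rw [hPdef, Finset.sum_pow_eq_sum_piAntidiag]
  have hprodnn : ∀ k : Fin κ → ℕ, (0:ℝ) ≤ ∏ i, x i ^ k i := fun k =>
    Finset.prod_nonneg fun i _ => pow_nonneg (hx0 i).le _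
  -- S r ≤ P ^ r
  have h3 : ∀ r : ℕ, (∑ k ∈ Finset.piAntidiag (Finset.univ : Finset (Fin κ)) r,
      ∏ i, x i ^ k i) ≤ P ^ r := by
    intro r
    rw [h2 r]
    refine Finset.sum_le_sum fun k _ => ?_
    have h1 : (1:ℝ) ≤ (Nat.multinomial Finset.univ k : ℝ) := by
      exact_mod_cast Nat.one_le_iff_ne_zero.mpr (Nat.multinomial_pos _ _).ne'
    exact le_mul_of_one_le_left (hprodnn k) h1
  -- P ^ q ≤ q! * S q
  have h4 : P ^ q ≤ F * ∑ k ∈ Finset.piAntidiag (Finset.univ : Finset (Fin κ)) q,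
      ∏ i, x i ^ k i := by
    rw [h2 q, Finset.mul_sum]
    refine Finset.sum_le_sum fun k hk => ?_
    have hsum : ∑ i, k i = q := (Finset.mem_piAntidiag.mp hk).1
    have hle : Nat.multinomial Finset.univ k ≤ q.factorial := by
      have hspec := Nat.multinomial_spec (Finset.univ : Finset (Fin κ)) k
      calc Nat.multinomial Finset.univ k
          ≤ (∏ i, (k i).factorial) * Nat.multinomial Finset.univ k :=
            Nat.le_mul_of_pos_left _ (Finset.prod_pos fun i _ => (k i).factorial_pos)
        _ = (∑ i, k i).factorial := hspec
        _ = q.factorial := by rw [hsum]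
    have : (Nat.multinomial Finset.univ k : ℝ) ≤ F := by
      rw [hFdef]; exact_mod_cast hle
    exact mul_le_mul_of_nonneg_right this (hprodnn k)
  -- bad set
  set bad := (Finset.piAntidiag (Finset.univ : Finset (Fin κ)) q).filter
      (fun k => ∃ i, 2 ≤ k i) with hbaddef
  set B : ℝ := ∑ k ∈ bad, ∏ i, x i ^ k i with hBdef
  -- q! * S q ≤ P ^ q + q! * B
  have h5 : F * (∑ k ∈ Finset.piAntidiag (Finset.univ : Finset (Fin κ)) q,
      ∏ i, x i ^ k i) ≤ P ^ q + F * B := by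
    have hsplit := Finset.sum_filter_add_sum_filter_not
      (Finset.piAntidiag (Finset.univ : Finset (Fin κ)) q)
      (fun k => ∃ i, 2 ≤ k i) (fun k => ∏ i, x i ^ k i)
    have hgood : (∑ k ∈ (Finset.piAntidiag (Finset.univ : Finset (Fin κ)) q).filter
        (fun k => ¬ ∃ i, 2 ≤ k i), F * ∏ i, x i ^ k i) ≤ P ^ q := by
      rw [h2 q]
      refine le_trans (le_of_eq (Finset.sum_congr rfl fun k hk => ?_))
        (Finset.sum_le_sum_of_subset_of_nonneg (Finset.filter_subset _ _) fun k _ _ => ?_)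
      · obtain ⟨hk1, hk2⟩ := Finset.mem_filter.mp hk
        have hsum : ∑ i, k i = q := (Finset.mem_piAntidiag.mp hk1).1
        have hone : ∏ i, (k i).factorial = 1 := by
          refine Finset.prod_eq_one fun i _ => ?_
          have : k i ≤ 1 := by
            by_contra hc
            exact hk2 ⟨i, by omega⟩
          rcases Nat.le_one_iff_eq_zero_or_eq_one.mp this with h | h <;> simp [h]
        have hspec := Nat.multinomial_spec (Finset.univ : Finset (Fin κ)) k
        rw [hone, one_mul, hsum] at hspec
        rw [hFdef, ← hspec]
      · have h1 : (0:ℝ) ≤ (Nat.multinomial Finset.univ k : ℝ) := by positivity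
        exact mul_nonneg h1 (hprodnn k)
    calc F * (∑ k ∈ Finset.piAntidiag (Finset.univ : Finset (Fin κ)) q, ∏ i, x i ^ k i)
        = (∑ k ∈ (Finset.piAntidiag (Finset.univ : Finset (Fin κ)) q).filter
            (fun k => ¬ ∃ i, 2 ≤ k i), F * ∏ i, x i ^ k i) + F * B := by
          rw [hBdef, ← Finset.mul_sum, ← mul_add]
          congr 1
          rw [add_comm, hbaddef]
          exact hsplit.symm
      _ ≤ P ^ q + F * B := by linarith [hgood]
  -- B ≤ 2 * P ^ (q - 2)
  set choice : (Fin κ → ℕ) → Fin κ := fun k =>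
    if h : ∃ j, 2 ≤ k j then h.choose else ⟨0, hκ0⟩ with hchoicedef
  have hchoice : ∀ k : Fin κ → ℕ, (∃ j, 2 ≤ k j) → 2 ≤ k (choice k) := by
    intro k h
    rw [hchoicedef]
    simp only [dif_pos h]
    exact h.choose_spec
  set φ : (Fin κ → ℕ) → (Fin κ) × (Fin κ → ℕ) := fun k =>
    (choice k, Function.update k (choice k) (k (choice k) - 2)) with hφdef
  set g : (Fin κ) × (Fin κ → ℕ) → ℝ := fun p => x p.1 ^ 2 * ∏ j, x j ^ p.2 j with hgdef
  have hterm : ∀ k ∈ bad, (∏ i, x i ^ k i) = g (φ k) := by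
    intro k hk
    obtain ⟨hk1, hex⟩ := Finset.mem_filter.mp hk
    have h2k : 2 ≤ k (choice k) := hchoice k hex
    rw [hgdef, hφdef]
    simp only
    rw [← Finset.mul_prod_erase Finset.univ (fun i => x i ^ k i) (Finset.mem_univ (choice k)),
      ← Finset.mul_prod_erase Finset.univ
        (fun j => x j ^ (Function.update k (choice k) (k (choice k) - 2)) j)
        (Finset.mem_univ (choice k))]
    rw [Function.update_self]
    have herase : ∏ j ∈ Finset.univ.erase (choice k),
        x j ^ (Function.update k (choice k) (k (choice k) - 2)) j
        = ∏ j ∈ Finset.univ.erase (choice k), x j ^ k j :=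
      Finset.prod_congr rfl fun j hj => by
        rw [Function.update_of_ne (Finset.ne_of_mem_erase hj)]
    rw [herase, ← mul_assoc, ← pow_add]
    congr 2
    omega
  have hmem : ∀ k ∈ bad, φ k ∈ Finset.univ ×ˢ
      Finset.piAntidiag (Finset.univ : Finset (Fin κ)) (q - 2) := by
    intro k hk
    obtain ⟨hk1, hex⟩ := Finset.mem_filter.mp hk
    have hsum : ∑ j, k j = q := (Finset.mem_piAntidiag.mp hk1).1
    have h2k : 2 ≤ k (choice k) := hchoice k hex
    refine Finset.mem_product.mpr ⟨Finset.mem_univ _, ?_⟩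
    rw [Finset.mem_piAntidiag]
    refine ⟨?_, fun i _ => Finset.mem_univ i⟩
    have hsum2 : (k (choice k) - 2) + ∑ j ∈ Finset.univ.erase (choice k), k j = q - 2 := by
      rw [← Finset.add_sum_erase Finset.univ k (Finset.mem_univ (choice k))] at hsum
      omega
    rw [hφdef]
    simp only
    rw [Finset.sum_update_of_mem (Finset.mem_univ _), ← Finset.erase_eq]
    exact hsum2
  have hinj : ∀ k1 ∈ bad, ∀ k2 ∈ bad, φ k1 = φ k2 → k1 = k2 := by
    intro k1 h1 k2 h2 heq
    have h21 : 2 ≤ k1 (choice k1) := hchoice k1 (Finset.mem_filter.mp h1).2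
    have h22 : 2 ≤ k2 (choice k2) := hchoice k2 (Finset.mem_filter.mp h2).2
    have hc : choice k1 = choice k2 := congrArg Prod.fst heq
    have hu : Function.update k1 (choice k1) (k1 (choice k1) - 2)
        = Function.update k2 (choice k2) (k2 (choice k2) - 2) := congrArg Prod.snd heq
    funext j
    by_cases hj : j = choice k1
    · have e1 := congrFun hu (choice k1)
      rw [Function.update_self] at e1
      rw [hc] at e1
      rw [Function.update_self] at e1
      rw [hc] at h21
      rw [hj, hc]
      omega
    · have e1 := congrFun hu j
      rw [Function.update_of_ne hj, Function.update_of_ne (hc ▸ hj)] at e1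
      exact e1
  have hx2 : (∑ i, x i ^ 2) ≤ 2 := by
    have := aux_sq κ (by omega)
    have hrw : (∑ i, x i ^ 2) = ∑ i ∈ Finset.range κ, (((i : ℝ) + 1)⁻¹) ^ 2 := by
      rw [hxdef]
      exact Fin.sum_univ_eq_sum_range (fun i => (((i:ℕ):ℝ) + 1)⁻¹ ^ 2) κ
    rw [hrw]
    have : (0:ℝ) < (κ:ℝ)⁻¹ := by positivity
    linarith
  have h6 : B ≤ 2 * P ^ (q - 2) := by
    have step1 : B = ∑ p ∈ bad.image φ, g p := by
      rw [Finset.sum_image hinj, hBdef]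
      exact Finset.sum_congr rfl hterm
    have step2 : (∑ p ∈ bad.image φ, g p) ≤ ∑ p ∈ Finset.univ ×ˢ
        Finset.piAntidiag (Finset.univ : Finset (Fin κ)) (q - 2), g p := by
      refine Finset.sum_le_sum_of_subset_of_nonneg ?_ fun p _ _ => ?_
      · intro p hp
        obtain ⟨k, hk, rfl⟩ := Finset.mem_image.mp hp
        exact hmem k hk
      · rw [hgdef]
        exact mul_nonneg (by positivity) (Finset.prod_nonneg fun j _ =>
          pow_nonneg (hx0 j).le _)
    have step3 : (∑ p ∈ Finset.univ ×ˢ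
        Finset.piAntidiag (Finset.univ : Finset (Fin κ)) (q - 2), g p)
        = (∑ i, x i ^ 2) * ∑ k ∈ Finset.piAntidiag (Finset.univ : Finset (Fin κ)) (q - 2),
          ∏ i, x i ^ k i := by
      rw [Finset.sum_product, Finset.sum_mul]
      exact Finset.sum_congr rfl fun i _ => by simp [hgdef, Finset.mul_sum]
    have hS2nn : (0:ℝ) ≤ ∑ k ∈ Finset.piAntidiag (Finset.univ : Finset (Fin κ)) (q - 2),
        ∏ i, x i ^ k i := Finset.sum_nonneg fun k _ => hprodnn k
    have hPnn : (0:ℝ) ≤ P := by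
      rw [hPdef]
      refine le_of_lt (Finset.sum_pos (fun i _ => hx0 i) ?_)
      exact ⟨⟨0, hκ0⟩, Finset.mem_univ _⟩
    calc B ≤ (∑ i, x i ^ 2) * ∑ k ∈ Finset.piAntidiag (Finset.univ : Finset (Fin κ)) (q - 2),
          ∏ i, x i ^ k i := by rw [step1]; rw [← step3] at *; exact step2
      _ ≤ 2 * P ^ (q - 2) := by
          have := h3 (q - 2)
          have h2' : (0:ℝ) ≤ ∑ i, x i ^ 2 := Finset.sum_nonneg fun i _ => by positivity
          nlinarith [pow_nonneg hPnn (q - 2)]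
  -- harmonic number facts
  have hPh : P = ((harmonic κ : ℚ) : ℝ) := by
    rw [hPdef, hxdef]
    rw [Fin.sum_univ_eq_sum_range (fun i => (((i:ℕ):ℝ) + 1)⁻¹) κ]
    rw [harmonic]
    push_cast
    rfl
  have hPL : L ≤ P := by
    rw [hPh, hLdef]
    calc Real.log κ ≤ Real.log (κ + 1) := by
          apply Real.log_le_log (by positivity)
          push_cast; linarith
      _ ≤ ((harmonic κ : ℚ) : ℝ) := by exact_mod_cast log_add_one_le_harmonic κ
  have hP1L : P ≤ 1 + L := by
    rw [hPh, hLdef]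
    exact_mod_cast harmonic_le_one_add_log κ
  have hlog2 : (0.6931471803:ℝ) < Real.log 2 := Real.log_two_gt_d9
  have hL2 : Real.log 2 ≤ L := by
    rw [hLdef]
    apply Real.log_le_log (by norm_num)
    exact_mod_cast hκ
  have hLpos : 0 < L := lt_of_lt_of_le (by linarith) hL2
  have h1P : 1 ≤ P := by
    have hmem0 := Finset.single_le_sum (f := x) (fun i _ => (hx0 i).le)
      (Finset.mem_univ (⟨0, hκ0⟩ : Fin κ))
    have : x ⟨0, hκ0⟩ = 1 := by rw [hxdef]; norm_num
    rw [hPdef]; linarith [hmem0, this ▸ hmem0]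
  have hP3L : P ≤ 3 * L := by nlinarith
  have hPnn : (0:ℝ) ≤ P := by linarith
  -- final assembly
  rw [hA]
  set Sq : ℝ := ∑ k ∈ Finset.piAntidiag (Finset.univ : Finset (Fin κ)) q,
    ∏ i, x i ^ k i with hSqdef
  clear_value x P L F B Sq
  have hlow : P ^ q / F ≤ Sq := by
    rw [div_le_iff₀ hF]
    linarith [h4]
  have hup : Sq - P ^ q / F ≤ 2 * P ^ (q - 2) := by
    have ha : F * (Sq - P ^ q / F) ≤ F * (2 * P ^ (q - 2)) := by
      rw [mul_sub, mul_div_cancel₀ _ hF.ne']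
      have := mul_le_mul_of_nonneg_left h6 hF.le
      linarith [h5]
    exact le_of_mul_le_mul_left ha hF
  have hLq : L ^ q ≤ P ^ q := pow_le_pow_left₀ hLpos.le hPL q
  have hpowsub : P ^ q - L ^ q ≤ q * P ^ (q - 1) := by
    have h0 := aux_pow_sub P L hLpos.le hPL q
    have hpnn : (0:ℝ) ≤ (q:ℝ) * P ^ (q - 1) :=
      mul_nonneg (Nat.cast_nonneg q) (pow_nonneg hPnn _)
    have h1 : (q:ℝ) * P ^ (q-1) * (P - L) ≤ (q:ℝ) * P ^ (q-1) * 1 :=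
      mul_le_mul_of_nonneg_left (by linarith) hpnn
    linarith
  have hP21 : P ^ (q - 2) ≤ P ^ (q - 1) := pow_le_pow_right₀ h1P (by omega)
  have hP3 : P ^ (q - 1) ≤ 3 ^ q * L ^ (q - 1) := by
    calc P ^ (q-1) ≤ (3 * L) ^ (q - 1) := pow_le_pow_left₀ hPnn hP3L (q-1)
      _ = 3 ^ (q-1) * L ^ (q-1) := mul_pow 3 L (q-1)
      _ ≤ 3 ^ q * L ^ (q-1) := by
          have h31 : (3:ℝ) ^ (q-1) ≤ 3 ^ q := pow_le_pow_right₀ (by norm_num) (by omega)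
          have := pow_nonneg hLpos.le (q-1)
          nlinarith
  rw [abs_sub_le_iff]
  constructor
  · -- Sq - L^q/F ≤ C L^(q-1)
    have key : Sq - L ^ q / F ≤ 2 * P ^ (q - 2) + (q:ℝ) * P ^ (q - 1) := by
      have hF1 : (1:ℝ) ≤ F := by
        rw [hFdef]; exact_mod_cast q.factorial_pos
      have hd : (P ^ q - L ^ q) / F ≤ (q:ℝ) * P ^ (q - 1) :=
        le_trans (div_le_self (by linarith [hLq]) hF1) hpowsub
      have : Sq - L ^ q / F = (Sq - P ^ q / F) + (P ^ q - L ^ q) / F := by ring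
      linarith [hup, hd]
    calc Sq - L ^ q / F ≤ 2 * P ^ (q - 2) + (q:ℝ) * P ^ (q - 1) := key
      _ ≤ ((q:ℝ) + 2) * P ^ (q - 1) := by nlinarith [hP21, pow_nonneg hPnn (q-1), pow_nonneg hPnn (q-2)]
      _ ≤ ((q:ℝ) + 2) * (3 ^ q * L ^ (q-1)) := by
          have : (0:ℝ) ≤ (q:ℝ) + 2 := by positivity
          nlinarith [hP3]
      _ = ((q:ℝ) + 2) * 3 ^ q * L ^ (q-1) := by ring
  · -- L^q/F - Sq ≤ C L^(q-1)
    have : L ^ q / F ≤ Sq := le_trans (by gcongr) hlow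
    have hrhs : (0:ℝ) ≤ ((q:ℝ) + 2) * 3 ^ q * L ^ (q-1) := by positivity
    linarith
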